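/- Let D be an integral domain that is not a field, and let A be a torsion-free D-module that is finitely generated. Then the intersection of the submodules dA over all nonzero d in D is the zero submodule (i.e., the D-adic topology on A is Hausdorff). -/

import Mathlib

/-- Let `D` be an integral domain that is not a field, and `A` a torsion-free finitely
generated `D`-module.  Then the intersection of the submodules `d • A` over all nonzero
`d ∈ D` is the zero submodule. -/
theorem stmt_0 {D A : Type*} [CommRing D] [IsDomain D] (hD : ¬ IsField D)
    [AddCommGroup A] [Module D A] [Module.Finite D A] [NoZeroSMulDivisors D A] :
    (⨅ d ∈ {d : D | d ≠ 0}, (Ideal.span {d} • (⊤ : Submodule D A))) = ⊥ := by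
  classical
  rw [eq_bot_iff]
  intro x hx
  simp only [Submodule.mem_iInf, Set.mem_setOf_eq] at hx
  rw [Submodule.mem_bot]
  by_contra hx0
  set K := FractionRing D
  set V := LocalizedModule (nonZeroDivisors D) A with hV
  set ι := LocalizedModule.mkLinearMap (nonZeroDivisors D) A with hι
  have hιx : ι x ≠ 0 := by
    intro h
    obtain ⟨r, hr, hrx⟩ := LocalizedModule.mem_ker_mkLinearMap_iff.mp
      (LinearMap.mem_ker.mpr h)
    exact hx0 ((smul_eq_zero.mp hrx).resolve_left (nonZeroDivisors.ne_zero hr))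
  obtain ⟨g, hg⟩ : ∃ g : Module.Dual K V, g (ι x) ≠ 0 := by
    have := mt (Module.forall_dual_apply_eq_zero_iff K (ι x)).mp hιx
    push_neg at this
    exact this
  let f : A →ₗ[D] K := (g.restrictScalars D).comp ι
  obtain ⟨S, hS⟩ := Module.Finite.fg_top (R := D) (M := A)
  obtain ⟨b, hb⟩ := IsLocalization.exist_integer_multiples (nonZeroDivisors D) S
    (fun a => f a)
  have hall : ∀ a : A, IsLocalization.IsInteger D ((b : D) • f a) := by
    have hle : (⊤ : Submodule D A) ≤
        Submodule.comap ((b : D) • f) (LinearMap.range (Algebra.linearMap D K)) := by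
      rw [← hS, Submodule.span_le]
      intro a ha
      simp only [SetLike.mem_coe, Submodule.mem_comap, LinearMap.smul_apply,
        LinearMap.mem_range]
      obtain ⟨v, hv⟩ := hb a ha
      exact ⟨v, by simpa [Submonoid.smul_def] using hv⟩
    intro a
    have := hle (Submodule.mem_top (x := a))
    obtain ⟨y, hy⟩ : ∃ y, (Algebra.linearMap D K) y = (b : D) • f a := by
      simpa only [Submodule.mem_comap, LinearMap.smul_apply, LinearMap.mem_range] using this
    exact ⟨y, hy⟩
  obtain ⟨u, hu⟩ := hall x
  have hdvd : ∀ d : D, d ≠ 0 → d ∣ u := by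
    intro d hd
    have hxd := hx d hd
    rw [Submodule.ideal_span_singleton_smul] at hxd
    rw [← SetLike.mem_coe, Submodule.coe_pointwise_smul] at hxd
    obtain ⟨a, -, ha⟩ := hxd
    obtain ⟨v, hv⟩ := hall a
    refine ⟨v, IsFractionRing.injective D K ?_⟩
    rw [hu, map_mul, hv, ← ha, map_smul, smul_comm, Algebra.smul_def]
  have hu0 : u = 0 := by
    by_contra hu0
    obtain ⟨p, hp0, hpu⟩ := Ring.exists_not_isUnit_of_not_isField hD
    obtain ⟨v, hv⟩ := hdvd (u * p) (mul_ne_zero hu0 hp0)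
    rw [mul_assoc] at hv
    have huv : u * (p * v) = u * 1 := by rw [mul_one]; exact hv.symm
    have : p * v = 1 := mul_left_cancel₀ hu0 huv
    exact hpu (IsUnit.of_mul_eq_one (a := p) v this)
  rw [hu0, map_zero, Algebra.smul_def] at hu
  have hb0 : algebraMap D K (b : D) ≠ 0 :=
    IsFractionRing.to_map_ne_zero_of_mem_nonZeroDivisors b.property
  have hfx : f x = 0 := by
    rcases mul_eq_zero.mp hu.symm with h | h
    · exact absurd h hb0
    · exact h
  exact hg hfx
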